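/- Let p be a prime, n and r positive integers with 2r ≤ n, and set λ = (2^r, 1^{n-2r}), the partition of n with r parts equal to 2 and n-2r parts equal to 1. The hook lengths of λ are: h_{i,1} = n - 2r + (r - i) + r - i + 2 - 1 for the first column and h_{i,2} = r - i + 1 for the second column (1 ≤ i ≤ r), and h_{j,1} = n - j - r + 1 for r < j ≤ n - r. Suppose there exist row indices with unequal p-adic valuations of the two hook lengths in that row, and let a be the largest index i ≤ r such that ν_p(h_{i,1}) ≠ ν_p(h_{i,2}). Then there exist integers u, v, w with 0 ≤ u, v < p and w ≥ 0 such that h_{a,2} = u + v·p^w. -/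

import Mathlib

private lemma val_add_eq_right {p a b : ℕ} [hp : Fact p.Prime] (ha : a ≠ 0) (hb : b ≠ 0)
    (h : padicValNat p b < padicValNat p a) : padicValNat p (a + b) = padicValNat p b := by
  have hq : (b : ℚ) ≠ 0 := by exact_mod_cast hb
  have hr : (a : ℚ) ≠ 0 := by exact_mod_cast ha
  have hqr : (b : ℚ) + a ≠ 0 := by positivity
  have hval : padicValRat p (b : ℚ) < padicValRat p (a : ℚ) := by
    rw [padicValRat.of_nat, padicValRat.of_nat]
    exact_mod_cast h
  have h1 := padicValRat.add_eq_of_lt (p := p) hqr hq hr hval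
  have h2 : ((a + b : ℕ) : ℚ) = (b : ℚ) + a := by push_cast; ring
  rw [← h2, padicValRat.of_nat, padicValRat.of_nat] at h1
  exact_mod_cast h1

/-- For the partition `λ = (2^r, 1^{n-2r})` of `n`, the hook lengths in row `i ≤ r` are
`h_{i,1} = n - r - i + 2` and `h_{i,2} = r - i + 1`.  If `a` is the largest row index
`i ≤ r` for which the two hook lengths of that row have different `p`-adic valuations,
then `h_{a,2}` has a `p`-adic expansion with at most two nonzero digits, one of which is
the units digit: `h_{a,2} = u + v * p ^ w` with `0 ≤ u, v < p`. -/
theorem hook_padic_two_digits (p : ℕ) (hp : p.Prime) (n r a : ℕ)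
    (hr : 0 < r) (h2r : 2 * r ≤ n) (ha : 0 < a) (har : a ≤ r)
    (hne : padicValNat p (n - r - a + 2) ≠ padicValNat p (r - a + 1))
    (hmax : ∀ i, a < i → i ≤ r →
      padicValNat p (n - r - i + 2) = padicValNat p (r - i + 1)) :
    ∃ u v w : ℕ, u < p ∧ v < p ∧ r - a + 1 = u + v * p ^ w := by
  haveI : Fact p.Prime := ⟨hp⟩
  obtain ⟨d, hdm⟩ : ∃ d : ℕ, d = n - 2 * r + 1 := ⟨_, rfl⟩
  obtain ⟨m, hmm⟩ : ∃ m : ℕ, m = r - a + 1 := ⟨_, rfl⟩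
  have hd0 : d ≠ 0 := by omega
  have hm1 : 1 ≤ m := by omega
  obtain ⟨t, htm⟩ : ∃ t : ℕ, t = padicValNat p d := ⟨_, rfl⟩
  obtain ⟨d', hdd⟩ : ∃ d', d = p ^ t * d' := htm ▸ pow_padicValNat_dvd
  have hd'0 : d' ≠ 0 := by rintro rfl; rw [mul_zero] at hdd; exact hd0 hdd
  have hnd' : ¬ p ∣ d' := by
    rintro ⟨c, hc⟩
    apply pow_succ_padicValNat_not_dvd (p := p) hd0
    rw [← htm]
    exact ⟨c, by rw [hdd, hc]; ring⟩
  have hdp0 : d' % p ≠ 0 := fun h0 => hnd' (Nat.dvd_of_mod_eq_zero h0)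
  have hdplt : d' % p < p := Nat.mod_lt _ hp.pos
  obtain ⟨s, hsm⟩ : ∃ s : ℕ, s = p - d' % p := ⟨_, rfl⟩
  have hs1 : 1 ≤ s := by omega
  have hs2 : s < p := by omega
  have hdps : p ∣ d' + s := by
    have h1 : d' + s = (d' - d' % p) + p := by
      have := Nat.mod_le d' p
      omega
    rw [h1]
    exact Nat.dvd_add (Nat.dvd_sub_mod d') dvd_rfl
  -- restated hypotheses
  have hne' : padicValNat p (d + m) ≠ padicValNat p m := by
    have h1 : n - r - a + 2 = d + m := by omega
    rw [← h1, hmm]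
    exact hne
  have hall : ∀ k, 1 ≤ k → k < m → padicValNat p (d + k) = padicValNat p k := by
    intro k hk1 hk2
    have h := hmax (r + 1 - k) (by omega) (by omega)
    rwa [show n - r - (r + 1 - k) + 2 = d + k by omega,
      show r - (r + 1 - k) + 1 = k by omega] at h
  -- claim 1 : s * p ^ t is a failure point
  have claim1 : padicValNat p (d + s * p ^ t) ≠ padicValNat p (s * p ^ t) := by
    have he : d + s * p ^ t = p ^ t * (d' + s) := by rw [hdd]; ring
    have hds0 : d' + s ≠ 0 := by omega
    have hvs : padicValNat p s = 0 :=
      padicValNat.eq_zero_of_not_dvd (fun h => by have := Nat.le_of_dvd (by omega) h; omega)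
    have h1 := one_le_padicValNat_of_dvd (by omega : d' + s ≠ 0) hdps
    rw [he, padicValNat.mul (pow_ne_zero _ hp.ne_zero) hds0,
      padicValNat.mul (by omega : s ≠ 0) (pow_ne_zero _ hp.ne_zero),
      padicValNat.prime_pow, hvs]
    omega
  -- claim 2 : everything below s * p ^ t is fine
  have claim2 : ∀ k, 1 ≤ k → k < s * p ^ t → padicValNat p (d + k) = padicValNat p k := by
    intro k hk1 hk2
    by_cases hc : padicValNat p k < t
    · exact val_add_eq_right hd0 (by omega) (htm ▸ hc)
    · push_neg at hc
      obtain ⟨k', hkk⟩ : ∃ k', k = p ^ t * k' :=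
        dvd_trans (pow_dvd_pow p (htm ▸ hc)) pow_padicValNat_dvd
      have hk'1 : 1 ≤ k' := by
        rcases Nat.eq_zero_or_pos k' with h0 | h0
        · rw [h0, mul_zero] at hkk; omega
        · exact h0
      have hk's : k' < s := by
        by_contra hcon
        push_neg at hcon
        have h1 : s * p ^ t ≤ k := by
          rw [hkk, mul_comm (p ^ t) k']
          exact Nat.mul_le_mul_right _ hcon
        omega
      have hndk' : ¬ p ∣ k' := fun h => by
        have := Nat.le_of_dvd (by omega) h; omega
      have hnddk : ¬ p ∣ (d' + k') := by
        intro h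
        have h1 : p ∣ (d' + s) - (d' + k') := Nat.dvd_sub hdps h
        rw [show d' + s - (d' + k') = s - k' by omega] at h1
        have := Nat.le_of_dvd (by omega) h1
        omega
      have he : d + k = p ^ t * (d' + k') := by rw [hdd, hkk]; ring
      rw [he, hkk, padicValNat.mul (pow_ne_zero _ hp.ne_zero) (by omega : d' + k' ≠ 0),
        padicValNat.mul (pow_ne_zero _ hp.ne_zero) (by omega : k' ≠ 0),
        padicValNat.eq_zero_of_not_dvd hnddk, padicValNat.eq_zero_of_not_dvd hndk']
  -- conclude m = s * p ^ t
  have hspt1 : 1 ≤ s * p ^ t :=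
    Nat.one_le_iff_ne_zero.mpr (Nat.mul_ne_zero (by omega) (pow_ne_zero _ hp.ne_zero))
  rcases lt_trichotomy m (s * p ^ t) with hlt | heq | hgt
  · exact absurd (claim2 m hm1 hlt) hne'
  · exact ⟨0, s, t, hp.pos, hs2, by omega⟩
  · exact absurd (hall (s * p ^ t) hspt1 hgt) claim1
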